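/- For every real number $q$ with $\frac{1}{2} \le q \le \frac{2}{3}$, the inequality $q^2 - 2q + 2 - h(q) \le \frac{1}{4}$ holds, and equality holds at $q = \frac{1}{2}$; consequently $\max_{q \in [1/2, 2/3]} \left( q^2 - 2q + 2 - h(q) \right) = \frac{1}{4}$. -/

import Mathlib

/-- The binary entropy function in bits: `h x = -x log₂ x - (1-x) log₂ (1-x)`.
Since `Real.logb 2 0 = 0` in Mathlib, this satisfies `h 0 = h 1 = 0`. -/
noncomputable def binEntropy2 (x : ℝ) : ℝ :=
  -x * Real.logb 2 x - (1 - x) * Real.logb 2 (1 - x)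

lemma binEntropy2_eq (x : ℝ) : binEntropy2 x = (Real.log 2)⁻¹ * Real.binEntropy x := by
  simp [binEntropy2, Real.binEntropy, Real.logb, Real.log_inv, div_eq_mul_inv]
  ring

lemma binEntropy2_half : binEntropy2 (1 / 2) = 1 := by
  rw [binEntropy2_eq, show (1/2:ℝ) = 2⁻¹ by norm_num, Real.binEntropy_two_inv,
    inv_mul_cancel₀ (by positivity : Real.log 2 ≠ 0)]

lemma log_nine_eighths : (1 : ℝ) / 9 ≤ Real.log (9 / 8) := by
  have := Real.one_sub_inv_le_log_of_pos (x := (9:ℝ)/8) (by norm_num)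
  calc (1:ℝ)/9 = 1 - ((9:ℝ)/8)⁻¹ := by norm_num
    _ ≤ _ := this

lemma logb_three : (55 : ℝ) / 36 ≤ Real.logb 2 3 := by
  have hlog2 : (0:ℝ) < Real.log 2 := Real.log_pos (by norm_num)
  rw [Real.logb, le_div_iff₀ hlog2]
  have h9 : Real.log 9 = 3 * Real.log 2 + Real.log (9/8) := by
    have : (9:ℝ) = 2^3 * (9/8) := by norm_num
    rw [this, Real.log_mul (by positivity) (by norm_num), Real.log_pow]
    push_cast; ring
  have h3 : Real.log 9 = 2 * Real.log 3 := by
    have : (9:ℝ) = 3^2 := by norm_num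
    rw [this, Real.log_pow]; push_cast; ring
  have h2 : Real.log 2 < 0.6931471808 := Real.log_two_lt_d9
  nlinarith [log_nine_eighths]

lemma binEntropy2_twothirds : binEntropy2 (2/3) = Real.logb 2 3 - 2/3 := by
  have h23 : Real.logb 2 (2/3 : ℝ) = 1 - Real.logb 2 3 := by
    rw [Real.logb_div (by norm_num) (by norm_num)]
    simp
  have h13 : Real.logb 2 (1 - 2/3 : ℝ) = -Real.logb 2 3 := by
    rw [show (1 - 2/3 : ℝ) = (3:ℝ)⁻¹ by norm_num, Real.logb_inv]
  rw [binEntropy2, h23, h13]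
  ring

lemma convex_f : ConvexOn ℝ (Set.Icc (1/2 : ℝ) (2/3))
    (fun q : ℝ => q ^ 2 - 2 * q + 2 - binEntropy2 q) := by
  have hsub : Set.Icc (1/2 : ℝ) (2/3) ⊆ Set.Icc (0:ℝ) 1 := by
    apply Set.Icc_subset_Icc <;> norm_num
  have hg : ConvexOn ℝ (Set.Icc (0:ℝ) 1) (fun q : ℝ => q ^ 2 - 2 * q + 2) := by
    refine ⟨convex_Icc _ _, fun x _ y _ a b ha hb hab => ?_⟩
    simp only [smul_eq_mul]
    nlinarith [mul_nonneg (mul_nonneg ha hb) (sq_nonneg (x - y))]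
  have hconc : ConcaveOn ℝ (Set.Icc (0:ℝ) 1) binEntropy2 := by
    have := (Real.strictConcave_binEntropy.concaveOn).smul
      (c := (Real.log 2)⁻¹) (by positivity)
    refine cast (congrArg (ConcaveOn ℝ (Set.Icc (0:ℝ) 1)) ?_) this
    funext x
    simp [binEntropy2_eq x, smul_eq_mul]
  have := hg.sub hconc
  exact (this.subset hsub (convex_Icc _ _))

theorem stmt_4 :
    (∀ q : ℝ, 1 / 2 ≤ q → q ≤ 2 / 3 → q ^ 2 - 2 * q + 2 - binEntropy2 q ≤ 1 / 4) ∧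
    ((1 / 2 : ℝ) ^ 2 - 2 * (1 / 2) + 2 - binEntropy2 (1 / 2) = 1 / 4) ∧
    IsGreatest ((fun q : ℝ => q ^ 2 - 2 * q + 2 - binEntropy2 q) '' Set.Icc (1 / 2) (2 / 3))
      (1 / 4) := by
  have heq : (1 / 2 : ℝ) ^ 2 - 2 * (1 / 2) + 2 - binEntropy2 (1 / 2) = 1 / 4 := by
    rw [binEntropy2_half]; norm_num
  have hend : (2/3 : ℝ) ^ 2 - 2 * (2/3) + 2 - binEntropy2 (2/3) ≤ 1 / 4 := by
    rw [binEntropy2_twothirds]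
    have := logb_three
    nlinarith
  have hmain : ∀ q : ℝ, 1 / 2 ≤ q → q ≤ 2 / 3 →
      q ^ 2 - 2 * q + 2 - binEntropy2 q ≤ 1 / 4 := by
    intro q h1 h2
    have hx : (1/2 : ℝ) ∈ Set.Icc (1/2 : ℝ) (2/3) := by constructor <;> norm_num
    have hy : (2/3 : ℝ) ∈ Set.Icc (1/2 : ℝ) (2/3) := by constructor <;> norm_num
    have hz : q ∈ segment ℝ (1/2 : ℝ) (2/3) := by
      rw [segment_eq_Icc (by norm_num : (1/2:ℝ) ≤ 2/3)]
      exact ⟨h1, h2⟩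
    have := convex_f.le_on_segment hx hy hz
    calc q ^ 2 - 2 * q + 2 - binEntropy2 q ≤ _ := this
      _ ≤ 1/4 := max_le (le_of_eq heq) hend
  refine ⟨hmain, heq, ⟨⟨1/2, by constructor <;> norm_num, heq⟩, ?_⟩⟩
  rintro y ⟨q, ⟨h1, h2⟩, rfl⟩
  exact hmain q h1 h2
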